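/- For 0<p1≤t<1 and μ in [0,1] (with μ(1-F(t))+(1-μ)(1-F(p1))>0), every maximizer of the accept revenue curve R^A over [0,1] is at least the monopoly price p*, the unique maximizer of R(p)=p(1-F(p)) on [0,1]. -/

import Mathlib

open MeasureTheory Set Filter

noncomputable section

namespace RepeatedSales

/-- `F` is the CDF of an atomless distribution fully supported on `[0,1]`:
continuous, strictly increasing on `[0,1]`, with `F 0 = 0` and `F 1 = 1`. -/
structure NiceCDF (F : ℝ → ℝ) : Prop where
  cont : Continuous F
  mono : StrictMonoOn F (Icc (0:ℝ) 1)
  zero : F 0 = 0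
  one : F 1 = 1

/-- The (price-posting) revenue curve `R(p) = p (1 - F p)`. -/
def Rcurve (F : ℝ → ℝ) (p : ℝ) : ℝ := p * (1 - F p)

/-- The CDF truncated at `x` from above: `F_{≤x}(v) = min (F v / F x) 1`. -/
def Fle (F : ℝ → ℝ) (x v : ℝ) : ℝ := min (F v / F x) 1

/-- The CDF truncated at `x` from below: `F_{≥x}(v) = max ((F v - F x)/(1 - F x)) 0`. -/
def Fge (F : ℝ → ℝ) (x v : ℝ) : ℝ := max ((F v - F x) / (1 - F x)) 0

/-- Revenue curve of the truncated distribution `F_{≤x}`. -/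
def Rle (F : ℝ → ℝ) (x p : ℝ) : ℝ := p * (1 - Fle F x p)

/-- Revenue curve of the truncated distribution `F_{≥x}`. -/
def Rge (F : ℝ → ℝ) (x p : ℝ) : ℝ := p * (1 - Fge F x p)

/-- Posterior probability of sophistication after a reject. -/
def muR (F : ℝ → ℝ) (μ p1 t : ℝ) : ℝ := μ * F t / (μ * F t + (1 - μ) * F p1)

/-- Posterior probability of sophistication after an accept. -/
def muA (F : ℝ → ℝ) (μ p1 t : ℝ) : ℝ :=
  μ * (1 - F t) / (μ * (1 - F t) + (1 - μ) * (1 - F p1))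

/-- The seller's posterior CDF over values after a first-round reject. -/
def FrejCDF (F : ℝ → ℝ) (μ p1 t v : ℝ) : ℝ :=
  muR F μ p1 t * Fle F t v + (1 - muR F μ p1 t) * Fle F p1 v

/-- The seller's posterior CDF over values after a first-round accept. -/
def FaccCDF (F : ℝ → ℝ) (μ p1 t v : ℝ) : ℝ :=
  muA F μ p1 t * Fge F t v + (1 - muA F μ p1 t) * Fge F p1 v

/-- The second-round revenue curve conditioned on a reject. -/
def Rrej (F : ℝ → ℝ) (μ p1 t p : ℝ) : ℝ := p * (1 - FrejCDF F μ p1 t p)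

/-- The second-round revenue curve conditioned on an accept. -/
def Racc (F : ℝ → ℝ) (μ p1 t p : ℝ) : ℝ := p * (1 - FaccCDF F μ p1 t p)

/-- The (topological) support of a measure on `ℝ`: points all of whose
neighborhoods have positive measure. -/
def msupp (ν : Measure ℝ) : Set ℝ := {x | ∀ U ∈ nhds x, ν U ≠ 0}

/-- A continuation `(p1, p2R, p2A, t)` at sophistication level `μ`:
`p2R`, `p2A` are (random) prices, i.e. probability measures supported in `[0,1]`,
every point of the support of `p2R` (resp. `p2A`) maximizes the reject (resp. accept)
revenue curve over `[0,1]`, and the threshold indifference equation holds.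
The denominators defining the posteriors are assumed positive. -/
structure Continuation (F : ℝ → ℝ) (μ p1 : ℝ) (p2R p2A : Measure ℝ) (t : ℝ) : Prop where
  denR_pos : 0 < μ * F t + (1 - μ) * F p1
  denA_pos : 0 < μ * (1 - F t) + (1 - μ) * (1 - F p1)
  probR : IsProbabilityMeasure p2R
  probA : IsProbabilityMeasure p2A
  suppR01 : msupp p2R ⊆ Icc 0 1
  suppA01 : msupp p2A ⊆ Icc 0 1
  optR : ∀ p ∈ msupp p2R, IsMaxOn (Rrej F μ p1 t) (Icc 0 1) p
  optA : ∀ p ∈ msupp p2A, IsMaxOn (Racc F μ p1 t) (Icc 0 1) p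
  indiff : t - p1 + (∫ x, max (t - x) 0 ∂p2A) = ∫ x, max (t - x) 0 ∂p2R

/-- A continuation with deterministic accept price `p2A ≥ t`. -/
def SophFocused (p2A : Measure ℝ) (t : ℝ) : Prop :=
  ∃ a : ℝ, p2A = Measure.dirac a ∧ t ≤ a

/-- A continuation with deterministic accept price `p2A < t`. -/
def NaiveFocused (p2A : Measure ℝ) (t : ℝ) : Prop :=
  ∃ a : ℝ, p2A = Measure.dirac a ∧ a < t

/-- The seller's expected revenue of a continuation at sophistication `μ`. -/
def sellerRev (F : ℝ → ℝ) (μ p1 t : ℝ) (p2R p2A : Measure ℝ) : ℝ :=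
  μ * (p1 * (1 - F t) + (∫ a, (if a ≤ t then a * (1 - F a) else 0) ∂p2A)
      + ∫ r, r * (F t - F r) ∂p2R)
  + (1 - μ) * (p1 * (1 - F p1) + (∫ a, a * (1 - F a) ∂p2A)
      + ∫ r, (if r ≤ p1 then r * (F p1 - F r) else 0) ∂p2R)

/-- Strict monotonicity of a strictly concave revenue curve below its unique maximizer. -/
lemma Rcurve_lt_of_lt_of_le_pstar (F : ℝ → ℝ)
    (hcon : StrictConcaveOn ℝ (Icc (0:ℝ) 1) (Rcurve F))
    (pstar : ℝ) (hps_mem : pstar ∈ Icc (0:ℝ) 1)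
    (hps_max : IsMaxOn (Rcurve F) (Icc (0:ℝ) 1) pstar)
    (hps_uniq : ∀ q ∈ Icc (0:ℝ) 1, IsMaxOn (Rcurve F) (Icc (0:ℝ) 1) q → q = pstar)
    {x y : ℝ} (hx : x ∈ Icc (0:ℝ) 1) (hy : y ∈ Icc (0:ℝ) 1) (hxy : x < y)
    (hyps : y ≤ pstar) : Rcurve F x < Rcurve F y := by
  have hxle : Rcurve F x ≤ Rcurve F pstar := hps_max hx
  rcases eq_or_lt_of_le hyps with hyeq | hylt
  · subst hyeq
    rcases lt_or_eq_of_le hxle with h | h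
    · exact h
    · exfalso
      have hxmax : IsMaxOn (Rcurve F) (Icc (0:ℝ) 1) x := by
        intro z hz
        have := hps_max hz
        rw [h]; exact this
      have := hps_uniq x hx hxmax
      linarith [hxy, this.le]
  · -- x < y < pstar
    have hd : 0 < pstar - x := by linarith
    set a : ℝ := (pstar - y) / (pstar - x) with ha_def
    set b : ℝ := (y - x) / (pstar - x) with hb_def
    have ha : 0 < a := div_pos (by linarith) hd
    have hb : 0 < b := div_pos (by linarith) hd
    have hab : a + b = 1 := by
      rw [ha_def, hb_def]
      field_simp
      ring
    have hcomb : a • x + b • pstar = y := by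
      simp only [smul_eq_mul, ha_def, hb_def]
      field_simp
      ring
    have hne : x ≠ pstar := by linarith
    have := hcon.2 hx hps_mem hne ha hb hab
    rw [hcomb] at this
    have h1 : a • Rcurve F x + b • Rcurve F x ≤ a • Rcurve F x + b • Rcurve F pstar := by
      simp only [smul_eq_mul]
      nlinarith [mul_nonneg hb.le (sub_nonneg.2 hxle)]
    have h2 : a • Rcurve F x + b • Rcurve F x = Rcurve F x := by
      simp only [smul_eq_mul]
      rw [← add_mul, hab, one_mul]
    linarith [h1, h2, this]

/-- For `0 < p1 ≤ t < 1` and `μ ∈ [0,1]` with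
`μ (1 - F t) + (1-μ)(1 - F p1) > 0`, every maximizer of the accept revenue curve
`R^A` over `[0,1]` is at least the monopoly price `p*`, the unique maximizer of
`R(p) = p(1 - F p)` on `[0,1]`. -/
theorem accept_price_ge_monopoly_price
    (F : ℝ → ℝ) (hF : NiceCDF F)
    (hcon : StrictConcaveOn ℝ (Icc (0:ℝ) 1) (Rcurve F))
    (pstar : ℝ) (hps_mem : pstar ∈ Icc (0:ℝ) 1)
    (hps_max : IsMaxOn (Rcurve F) (Icc (0:ℝ) 1) pstar)
    (hps_uniq : ∀ q ∈ Icc (0:ℝ) 1, IsMaxOn (Rcurve F) (Icc (0:ℝ) 1) q → q = pstar)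
    (μ p1 t : ℝ) (hμ : μ ∈ Icc (0:ℝ) 1)
    (hp1 : 0 < p1) (hp1t : p1 ≤ t) (ht : t < 1)
    (hden : 0 < μ * (1 - F t) + (1 - μ) * (1 - F p1)) :
    ∀ p ∈ Icc (0:ℝ) 1, IsMaxOn (Racc F μ p1 t) (Icc (0:ℝ) 1) p → pstar ≤ p := by
  intro p hp hmax
  by_contra hcontra
  push_neg at hcontra
  -- basic facts
  have hμ0 : 0 ≤ μ := hμ.1
  have hμ1 : μ ≤ 1 := hμ.2
  have ht0 : 0 ≤ t := le_trans hp1.le hp1t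
  have htm : t ∈ Icc (0:ℝ) 1 := ⟨ht0, ht.le⟩
  have hp1m : p1 ∈ Icc (0:ℝ) 1 := ⟨hp1.le, le_trans hp1t ht.le⟩
  have h1m : (1:ℝ) ∈ Icc (0:ℝ) 1 := ⟨by norm_num, le_refl _⟩
  have hFt1 : F t < 1 := by
    have := hF.mono htm h1m ht
    rwa [hF.one] at this
  have hFp1t : F p1 ≤ F t := (hF.mono.monotoneOn) hp1m htm hp1t
  have h1t : 0 < 1 - F t := by linarith
  have h1p1 : 0 < 1 - F p1 := by linarith
  set A : ℝ := muA F μ p1 t with hA_def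
  have hA0 : 0 ≤ A := by
    apply div_nonneg _ hden.le
    exact mul_nonneg hμ0 h1t.le
  have hA1 : A ≤ 1 := by
    rw [hA_def, muA, div_le_one hden]
    nlinarith
  have hmono : MonotoneOn F (Icc (0:ℝ) 1) := hF.mono.monotoneOn
  -- region formulas
  have hFge_zero : ∀ x v : ℝ, F v ≤ F x → F x < 1 → Fge F x v = 0 := by
    intro x v hvx hx1
    rw [Fge, max_eq_right]
    exact div_nonpos_of_nonpos_of_nonneg (by linarith) (by linarith)
  have hFge_pos : ∀ x v : ℝ, F x ≤ F v → F x < 1 →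
      Fge F x v = (F v - F x) / (1 - F x) := by
    intro x v hvx hx1
    rw [Fge, max_eq_left]
    exact div_nonneg (by linarith) (by linarith)
  have hR1 : ∀ q ∈ Icc (0:ℝ) 1, q ≤ p1 → Racc F μ p1 t q = q := by
    intro q hq hqp1
    have h1 : F q ≤ F p1 := hmono hq hp1m hqp1
    have h2 : F q ≤ F t := le_trans h1 hFp1t
    rw [Racc, FaccCDF, hFge_zero t q h2 hFt1, hFge_zero p1 q h1 (by linarith)]
    rw [← hA_def]; ring
  have hR2 : ∀ q ∈ Icc (0:ℝ) 1, p1 ≤ q → q ≤ t →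
      Racc F μ p1 t q = A * q + (1 - A) / (1 - F p1) * Rcurve F q := by
    intro q hq hp1q hqt
    have h1 : F p1 ≤ F q := hmono hp1m hq hp1q
    have h2 : F q ≤ F t := hmono hq htm hqt
    rw [Racc, FaccCDF, hFge_zero t q h2 hFt1, hFge_pos p1 q h1 (by linarith),
      ← hA_def, Rcurve]
    field_simp
    ring
  have hR3 : ∀ q ∈ Icc (0:ℝ) 1, t ≤ q →
      Racc F μ p1 t q = (A / (1 - F t) + (1 - A) / (1 - F p1)) * Rcurve F q := by
    intro q hq htq
    have h1 : F t ≤ F q := hmono htm hq htq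
    have h2 : F p1 ≤ F q := le_trans hFp1t h1
    rw [Racc, FaccCDF, hFge_pos t q h1 hFt1, hFge_pos p1 q h2 (by linarith),
      ← hA_def, Rcurve]
    field_simp
    ring
  -- case analysis
  rcases lt_or_ge p p1 with hpp1 | hpp1
  · -- p < p1 : compare with p1
    have h1 : Racc F μ p1 t p1 ≤ Racc F μ p1 t p := hmax hp1m
    rw [hR1 p hp hpp1.le, hR1 p1 hp1m (le_refl _)] at h1
    linarith
  · rcases lt_or_ge p t with hpt | hpt
    · -- p1 ≤ p < t : compare with q = min pstar t
      set q : ℝ := min pstar t with hq_def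
      have hqm : q ∈ Icc (0:ℝ) 1 :=
        ⟨le_min hps_mem.1 ht0, le_trans (min_le_right _ _) ht.le⟩
      have hp1q : p1 ≤ q := le_min (le_trans hpp1 hcontra.le) hp1t
      have hqt : q ≤ t := min_le_right _ _
      have hpq : p < q := lt_min hcontra hpt
      have hqps : q ≤ pstar := min_le_left _ _
      have hΔR : Rcurve F p < Rcurve F q :=
        Rcurve_lt_of_lt_of_le_pstar F hcon pstar hps_mem hps_max hps_uniq hp hqm hpq hqps
      have h1 : Racc F μ p1 t q ≤ Racc F μ p1 t p := hmax hqm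
      rw [hR2 p hp hpp1 hpt.le, hR2 q hqm hp1q hqt] at h1
      rcases lt_or_eq_of_le hA1 with hAlt | hAeq
      · have hc1 : 0 < (1 - A) / (1 - F p1) := div_pos (by linarith) h1p1
        nlinarith
      · rw [hAeq] at h1
        simp at h1
        linarith
    · -- t ≤ p < pstar : compare with pstar
      have h1 : Racc F μ p1 t pstar ≤ Racc F μ p1 t p := hmax hps_mem
      have htps : t ≤ pstar := le_trans hpt hcontra.le
      have hΔR : Rcurve F p < Rcurve F pstar :=
        Rcurve_lt_of_lt_of_le_pstar F hcon pstar hps_mem hps_max hps_uniq hp hps_mem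
          hcontra (le_refl _)
      rw [hR3 p hp hpt, hR3 pstar hps_mem htps] at h1
      have hK : 0 < A / (1 - F t) + (1 - A) / (1 - F p1) := by
        have h2 : A / (1 - F p1) ≤ A / (1 - F t) :=
          div_le_div_of_nonneg_left hA0 h1t (by linarith)
        have h3 : A / (1 - F p1) + (1 - A) / (1 - F p1) = 1 / (1 - F p1) := by
          field_simp
          ring
        have h4 : 0 < 1 / (1 - F p1) := by positivity
        linarith
      nlinarith

end RepeatedSales
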